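/- Euler's formula: γ = ln(4/π) + 2 ∑_{n=2}^∞ (−1)^n ζ(n)/(2^n n), where ζ is the Riemann zeta function. -/

import Mathlib

open Filter Topology Finset

/-- The k-th term `1/(2(k+1)) - log(1 + 1/(2(k+1)))`. -/
noncomputable def eulerF (k : ℕ) : ℝ :=
  1 / (2 * ((k : ℝ) + 1)) - Real.log (1 + 1 / (2 * ((k : ℝ) + 1)))

lemma eulerF_nonneg (k : ℕ) : 0 ≤ eulerF k := by
  have h : (0:ℝ) < 1 + 1 / (2 * ((k : ℝ) + 1)) := by positivity
  have := Real.log_le_sub_one_of_pos h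
  simp only [eulerF]
  linarith

lemma eulerF_sum (n : ℕ) :
    ∑ k ∈ Finset.range n, eulerF k
      = Real.BohrMollerup.logGammaSeq (1/2) n - Real.log 2
        + (1/2) * ((harmonic n : ℝ) - Real.log n) := by
  induction n with
  | zero =>
    simp [Real.BohrMollerup.logGammaSeq, Real.log_inv]
  | succ n ih =>
    rw [Finset.sum_range_succ, ih]
    have h1 : (0:ℝ) < (n:ℝ) + 1 := by positivity
    have hfac : (0:ℝ) < (n.factorial : ℝ) := by exact_mod_cast n.factorial_pos
    have hsplit : Real.log (1/2 + ((n:ℝ)+1))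
        = Real.log ((n:ℝ)+1) + Real.log (1 + 1/(2*((n:ℝ)+1))) := by
      rw [← Real.log_mul (by positivity) (by positivity)]
      congr 1
      field_simp
      ring
    have hharm : (harmonic (n+1) : ℝ) = (harmonic n : ℝ) + 1/((n:ℝ)+1) := by
      rw [harmonic_succ]
      push_cast
      ring
    have hstep : Real.BohrMollerup.logGammaSeq (1/2) (n+1)
        = Real.BohrMollerup.logGammaSeq (1/2) n
          + (1/2) * Real.log ((n:ℝ)+1) - (1/2) * Real.log n
          + Real.log ((n:ℝ)+1) - Real.log (1/2 + ((n:ℝ)+1)) := by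
      have hlogfac : Real.log ((n+1).factorial : ℕ) = Real.log ((n:ℝ)+1) + Real.log (n.factorial : ℕ) := by
        rw [Nat.factorial_succ]
        push_cast
        rw [Real.log_mul (by positivity) (by positivity)]
      simp only [Real.BohrMollerup.logGammaSeq, Finset.sum_range_succ]
      push_cast
      push_cast at hlogfac
      rw [hlogfac]
      ring
    rw [hstep, hsplit, hharm]
    simp only [eulerF]
    have he : (1:ℝ) / (2 * ((n:ℝ) + 1)) = (1 / ((n:ℝ)+1)) * (1/2) := by
      field_simp
    rw [he]
    push_cast
    ring

lemma eulerF_tendsto :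
    Tendsto (fun n => ∑ k ∈ Finset.range n, eulerF k) atTop
      (𝓝 (Real.log (Real.Gamma (1/2)) - Real.log 2
        + (1/2) * Real.eulerMascheroniConstant)) := by
  have h1 := Real.BohrMollerup.tendsto_log_gamma (x := (1/2 : ℝ)) (by norm_num)
  have h2 := Real.tendsto_harmonic_sub_log
  have h3 := (h1.sub (tendsto_const_nhds (x := Real.log 2))).add (h2.const_mul (1/2 : ℝ))
  refine h3.congr fun n => ?_
  rw [eulerF_sum n]

lemma eulerF_hasSum :
    HasSum eulerF (Real.log (Real.Gamma (1/2)) - Real.log 2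
        + (1/2) * Real.eulerMascheroniConstant) :=
  (hasSum_iff_tendsto_nat_of_nonneg eulerF_nonneg _).mpr eulerF_tendsto

/-- The summand of the double series. -/
noncomputable def eulerA (p : ℕ × ℕ) : ℝ :=
  (-1 : ℝ) ^ (p.1 + 2) * (1 / ((p.2 : ℝ) + 1)) ^ (p.1 + 2) / (2 ^ (p.1 + 2) * ((p.1 : ℝ) + 2))

lemma eulerA_inner_hasSum (k : ℕ) :
    HasSum (fun n : ℕ => eulerA (n, k)) (eulerF k) := by
  set x : ℝ := 1 / (2 * ((k:ℝ) + 1)) with hx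
  have hx0 : 0 < x := by positivity
  have hx1 : |(-x)| < 1 := by
    rw [abs_neg, abs_of_pos hx0, hx]
    rw [div_lt_one (by positivity)]
    nlinarith [Nat.cast_nonneg (α := ℝ) k]
  have h := Real.hasSum_pow_div_log_of_abs_lt_one hx1
  rw [sub_neg_eq_add] at h
  have h2 := (hasSum_nat_add_iff' (f := fun n : ℕ => (-x) ^ (n+1) / ((n:ℝ)+1)) 1).mpr h
  simp only [Finset.sum_range_one, pow_one, Nat.cast_zero, zero_add, div_one] at h2
  have h3 : -Real.log (1 + x) - -x = eulerF k := by
    simp only [eulerF, ← hx]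
    ring_nf
  rw [h3] at h2
  refine h2.congr_fun fun n => ?_
  show eulerA (n, k) = (-x) ^ (n + 1 + 1) / ((↑(n+1) : ℝ) + 1)
  have hk1 : ((k:ℝ)+1) ≠ 0 := by positivity
  rw [show -x = (-1) / (2*((k:ℝ)+1)) from by rw [hx]; ring, div_pow, mul_pow]
  simp only [eulerA, div_pow, one_pow]
  push_cast
  field_simp
  ring

set_option maxHeartbeats 1000000 in
lemma eulerA_summable : Summable eulerA := by
  have hg : Summable (fun p : ℕ × ℕ => ((1:ℝ)/2) ^ p.1 * (1 / ((p.2:ℝ)+1)) ^ 2) := by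
    have hf : Summable (fun n : ℕ => ((1:ℝ)/2) ^ n) :=
      summable_geometric_of_lt_one (by norm_num) (by norm_num)
    have hg2 : Summable (fun k : ℕ => (1 / ((k:ℝ)+1)) ^ 2) := by
      have h0 := (Real.summable_one_div_nat_pow (p := 2)).mpr (by norm_num)
      have h2 := (summable_nat_add_iff (f := fun n : ℕ => 1 / (n:ℝ) ^ 2) 1).mpr h0
      refine h2.congr fun k => ?_
      rw [div_pow, one_pow]
      push_cast
      ring
    have hf' : 0 ≤ (fun n : ℕ => ((1:ℝ)/2) ^ n) := by
      intro n
      positivity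
    have hg2' : 0 ≤ (fun k : ℕ => (1 / ((k:ℝ)+1)) ^ 2) := by
      intro k
      positivity
    exact Summable.mul_of_nonneg hf hg2 hf' hg2'
  refine Summable.of_norm (hg.of_nonneg_of_le (fun p => norm_nonneg _) fun p => ?_)
  obtain ⟨n, k⟩ := p
  have hk1 : (0:ℝ) < (k:ℝ) + 1 := by positivity
  have habs : ‖eulerA (n, k)‖
      = (1 / ((k:ℝ)+1)) ^ (n+2) / (2 ^ (n+2) * ((n:ℝ)+2)) := by
    rw [Real.norm_eq_abs, eulerA, abs_div, abs_mul, abs_pow, abs_pow, abs_neg, abs_one,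
      one_pow, one_mul, abs_of_pos (by positivity), abs_of_pos (by positivity)]
  rw [habs]
  have hle1 : 1 / ((k:ℝ)+1) ≤ 1 := by
    rw [div_le_one hk1]
    linarith [Nat.cast_nonneg (α := ℝ) k]
  have h1 : (1 / ((k:ℝ)+1)) ^ (n+2) ≤ (1 / ((k:ℝ)+1)) ^ 2 :=
    pow_le_pow_of_le_one (by positivity) hle1 (by omega)
  have h2 : (2:ℝ) ^ n ≤ 2 ^ (n+2) * ((n:ℝ)+2) := by
    have : (2:ℝ) ^ n ≤ 2 ^ (n+2) := by
      apply pow_le_pow_right₀ (by norm_num) (by omega)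
    nlinarith [pow_pos (show (0:ℝ) < 2 by norm_num) (n+2), Nat.cast_nonneg (α := ℝ) n]
  calc (1 / ((k:ℝ)+1)) ^ (n+2) / (2 ^ (n+2) * ((n:ℝ)+2))
      ≤ (1 / ((k:ℝ)+1)) ^ 2 / 2 ^ n := by
        apply div_le_div₀ (by positivity) h1 (by positivity) h2
    _ = ((1:ℝ)/2) ^ n * (1 / ((k:ℝ)+1)) ^ 2 := by
        rw [div_pow, one_pow, div_pow, one_pow]
        ring

theorem euler_formula_gamma :
    Real.eulerMascheroniConstant
      = Real.log (4 / Real.pi)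
        + 2 * ∑' n : ℕ, (-1 : ℝ) ^ (n + 2)
            * (∑' k : ℕ, 1 / ((k : ℝ) + 1) ^ (n + 2)) / (2 ^ (n + 2) * (n + 2)) := by
  have hswap : (∑' k : ℕ, eulerF k) = ∑' (n : ℕ) (k : ℕ), eulerA (n, k) := by
    rw [show (∑' (n : ℕ) (k : ℕ), eulerA (n, k)) = ∑' (k : ℕ) (n : ℕ), eulerA (n, k) from
      (Summable.tsum_comm (f := fun n k => eulerA (n, k)) eulerA_summable).symm]
    exact (tsum_congr fun k => (eulerA_inner_hasSum k).tsum_eq).symm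
  have hAn : ∀ n : ℕ, (∑' k : ℕ, eulerA (n, k))
      = (-1 : ℝ) ^ (n + 2) * (∑' k : ℕ, 1 / ((k : ℝ) + 1) ^ (n + 2))
          / (2 ^ (n + 2) * ((n:ℝ) + 2)) := by
    intro n
    have : (fun k : ℕ => eulerA (n, k))
        = fun k : ℕ => ((-1 : ℝ) ^ (n + 2) / (2 ^ (n + 2) * ((n:ℝ) + 2)))
            * (1 / ((k : ℝ) + 1) ^ (n + 2)) := by
      funext k
      simp only [eulerA, div_pow, one_pow]
      ring
    rw [this, tsum_mul_left]
    ring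
  have hts : (∑' k : ℕ, eulerF k)
      = Real.log (Real.Gamma (1/2)) - Real.log 2 + (1/2) * Real.eulerMascheroniConstant :=
    eulerF_hasSum.tsum_eq
  have hsum_eq : (∑' n : ℕ, (-1 : ℝ) ^ (n + 2)
      * (∑' k : ℕ, 1 / ((k : ℝ) + 1) ^ (n + 2)) / (2 ^ (n + 2) * ((n:ℝ) + 2)))
      = Real.log (Real.Gamma (1/2)) - Real.log 2 + (1/2) * Real.eulerMascheroniConstant := by
    rw [← hts, hswap]
    exact tsum_congr fun n => (hAn n).symm
  have hGamma : Real.Gamma (1/2) = Real.sqrt Real.pi := Real.Gamma_one_half_eq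
  have hlogsqrt : Real.log (Real.sqrt Real.pi) = Real.log Real.pi / 2 :=
    Real.log_sqrt Real.pi_pos.le
  have hlog4 : Real.log (4 / Real.pi) = 2 * Real.log 2 - Real.log Real.pi := by
    rw [Real.log_div (by norm_num) Real.pi_pos.ne']
    rw [show (4:ℝ) = 2 ^ 2 by norm_num, Real.log_pow]
    push_cast
    ring
  rw [hsum_eq, hGamma, hlogsqrt, hlog4]
  ring
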